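/- Let (Ω, 𝓕, ℙ) be a probability space, let m n be positive integers, let S be a (deterministic) symmetric positive definite real n×n matrix and P̄xy a (deterministic) real m×n matrix. Let X : Ω → Matrix(m,n,ℝ) be a random matrix with E[X] = P̄xy and let T : Ω → Matrix(n,n,ℝ) be a random matrix such that T(ω) is symmetric and positive definite almost surely, with E[T] = S; assume all matrix-valued expressions below are entrywise integrable. Define the random matrices P_est = −X·T⁻¹·Xᵀ and P_ac = X·T⁻¹·S·T⁻¹·Xᵀ − P̄xy·T⁻¹·Xᵀ − X·T⁻¹·P̄xyᵀ. Then the matrix E[P_ac − P_est] is positive semidefinite. -/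

import Mathlib

open Matrix MeasureTheory

lemma symm_dot {n : ℕ} (A : Matrix (Fin n) (Fin n) ℝ) (hA : Aᵀ = A) (x y : Fin n → ℝ) :
    x ⬝ᵥ (A *ᵥ y) = y ⬝ᵥ (A *ᵥ x) := by
  rw [dotProduct_mulVec, ← mulVec_transpose, hA, dotProduct_comm]

lemma quad_nonneg {n : ℕ} {A : Matrix (Fin n) (Fin n) ℝ} (h : A.PosSemidef) (x : Fin n → ℝ) :
    0 ≤ x ⬝ᵥ (A *ᵥ x) := by simpa using h.dotProduct_mulVec_nonneg x

lemma key_vec {n : ℕ} {S T : Matrix (Fin n) (Fin n) ℝ} (hS : S.PosDef) (hT : T.PosDef)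
    (z w : Fin n → ℝ) :
    2 * ((S⁻¹ *ᵥ w) ⬝ᵥ z) - (S⁻¹ *ᵥ w) ⬝ᵥ (T *ᵥ (S⁻¹ *ᵥ w)) - w ⬝ᵥ (S⁻¹ *ᵥ w)
      ≤ (T⁻¹ *ᵥ z) ⬝ᵥ (S *ᵥ (T⁻¹ *ᵥ z)) + (T⁻¹ *ᵥ z) ⬝ᵥ (T *ᵥ (T⁻¹ *ᵥ z))
        - 2 * (w ⬝ᵥ (T⁻¹ *ᵥ z)) := by
  set u := T⁻¹ *ᵥ z with hu
  set q := S⁻¹ *ᵥ w with hqdef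
  have hSsymm : Sᵀ = S := hS.isHermitian.eq
  have hTsymm : Tᵀ = T := hT.isHermitian.eq
  have hq : S *ᵥ q = w := by
    rw [hqdef, mulVec_mulVec, Matrix.mul_nonsing_inv _ (isUnit_iff_ne_zero.mpr hS.det_pos.ne'), one_mulVec]
  have hz : T *ᵥ u = z := by
    rw [hu, mulVec_mulVec, Matrix.mul_nonsing_inv _ (isUnit_iff_ne_zero.mpr hT.det_pos.ne'), one_mulVec]
  have h1 : 0 ≤ (u - q) ⬝ᵥ (S *ᵥ (u - q)) := quad_nonneg hS.posSemidef _
  have h2 : 0 ≤ (u - q) ⬝ᵥ (T *ᵥ (u - q)) := quad_nonneg hT.posSemidef _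
  have e1 : (u - q) ⬝ᵥ (S *ᵥ (u - q))
      = u ⬝ᵥ (S *ᵥ u) - 2 * (w ⬝ᵥ u) + w ⬝ᵥ q := by
    have hqu : q ⬝ᵥ (S *ᵥ u) = w ⬝ᵥ u := by
      rw [symm_dot S hSsymm, hq, dotProduct_comm]
    have huq : u ⬝ᵥ (S *ᵥ q) = w ⬝ᵥ u := by rw [hq, dotProduct_comm]
    have hqq : q ⬝ᵥ (S *ᵥ q) = w ⬝ᵥ q := by
      rw [symm_dot S hSsymm, hq, dotProduct_comm]
    simp only [mulVec_sub, dotProduct_sub, sub_dotProduct, hqu, huq, hqq]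
    ring
  have e2 : (u - q) ⬝ᵥ (T *ᵥ (u - q))
      = u ⬝ᵥ (T *ᵥ u) - 2 * (q ⬝ᵥ z) + q ⬝ᵥ (T *ᵥ q) := by
    have hqu : q ⬝ᵥ (T *ᵥ u) = q ⬝ᵥ z := by rw [hz]
    have huq : u ⬝ᵥ (T *ᵥ q) = q ⬝ᵥ z := by rw [symm_dot T hTsymm, hz]
    simp only [mulVec_sub, dotProduct_sub, sub_dotProduct, hqu, huq]
    ring
  rw [e1] at h1; rw [e2] at h2
  have hwu : w ⬝ᵥ q = q ⬝ᵥ w := dotProduct_comm _ _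
  linarith

lemma key_mat {m n : ℕ} {S T : Matrix (Fin n) (Fin n) ℝ} (hS : S.PosDef) (hT : T.PosDef)
    (X Pxy : Matrix (Fin m) (Fin n) ℝ) (v : Fin m → ℝ) :
    2 * ((S⁻¹ *ᵥ (Pxyᵀ *ᵥ v)) ⬝ᵥ (Xᵀ *ᵥ v))
      - (S⁻¹ *ᵥ (Pxyᵀ *ᵥ v)) ⬝ᵥ (T *ᵥ (S⁻¹ *ᵥ (Pxyᵀ *ᵥ v)))
      - (Pxyᵀ *ᵥ v) ⬝ᵥ (S⁻¹ *ᵥ (Pxyᵀ *ᵥ v))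
    ≤ v ⬝ᵥ ((X * T⁻¹ * S * T⁻¹ * Xᵀ - Pxy * T⁻¹ * Xᵀ - X * T⁻¹ * Pxyᵀ + X * T⁻¹ * Xᵀ) *ᵥ v) := by
  have hTsymm : Tᵀ = T := hT.isHermitian.eq
  have hTinvsymm : (T⁻¹)ᵀ = T⁻¹ := by rw [transpose_nonsing_inv, hTsymm]
  set z := Xᵀ *ᵥ v with hzdef
  set w := Pxyᵀ *ᵥ v with hwdef
  set u := T⁻¹ *ᵥ z with hu
  have hz : T *ᵥ u = z := by
    rw [hu, mulVec_mulVec, Matrix.mul_nonsing_inv _ (isUnit_iff_ne_zero.mpr hT.det_pos.ne'), one_mulVec]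
  have hdX : ∀ r : Fin n → ℝ, v ⬝ᵥ (X *ᵥ r) = z ⬝ᵥ r := by
    intro r; rw [dotProduct_mulVec, hzdef, mulVec_transpose]
  have hdP : ∀ r : Fin n → ℝ, v ⬝ᵥ (Pxy *ᵥ r) = w ⬝ᵥ r := by
    intro r; rw [dotProduct_mulVec, hwdef, mulVec_transpose]
  have t1 : v ⬝ᵥ ((X * T⁻¹ * S * T⁻¹ * Xᵀ) *ᵥ v) = u ⬝ᵥ (S *ᵥ u) := by
    rw [← mulVec_mulVec, ← mulVec_mulVec, ← mulVec_mulVec, ← mulVec_mulVec, hdX,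
      ← hzdef, ← hu, symm_dot _ hTinvsymm, ← hu, dotProduct_comm]
  have t2 : v ⬝ᵥ ((Pxy * T⁻¹ * Xᵀ) *ᵥ v) = w ⬝ᵥ u := by
    rw [← mulVec_mulVec, ← mulVec_mulVec, hdP, ← hzdef, ← hu]
  have t3 : v ⬝ᵥ ((X * T⁻¹ * Pxyᵀ) *ᵥ v) = w ⬝ᵥ u := by
    rw [← mulVec_mulVec, ← mulVec_mulVec, hdX, ← hwdef, symm_dot _ hTinvsymm, ← hu]
  have t4 : v ⬝ᵥ ((X * T⁻¹ * Xᵀ) *ᵥ v) = u ⬝ᵥ (T *ᵥ u) := by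
    rw [← mulVec_mulVec, ← mulVec_mulVec, hdX, ← hzdef, ← hu, hz, dotProduct_comm]
  have key := key_vec hS hT z w
  rw [add_mulVec, sub_mulVec, sub_mulVec, dotProduct_add, dotProduct_sub, dotProduct_sub,
    t1, t2, t3, t4]
  linarith

/-- **Theorem 1 of the paper (inequality part).**
If `X` is an unbiased random approximation of the cross-covariance `Pxy` and `T` is an
almost surely symmetric positive definite unbiased random approximation of the residual
covariance `S`, then the expected difference between the actual covariance change
`P_ac = X T⁻¹ S T⁻¹ Xᵀ − Pxy T⁻¹ Xᵀ − X T⁻¹ Pxyᵀ` and the estimated covariance change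
`P_est = −X T⁻¹ Xᵀ` is positive semidefinite. Expectation is taken entrywise. -/
theorem conventional_framework_underestimates_covariance
    {Ω : Type*} [MeasurableSpace Ω] (ℙ : Measure Ω) [IsProbabilityMeasure ℙ]
    {m n : ℕ} (hm : 0 < m) (hn : 0 < n)
    (S : Matrix (Fin n) (Fin n) ℝ) (hS : S.PosDef)
    (Pxy : Matrix (Fin m) (Fin n) ℝ)
    (X : Ω → Matrix (Fin m) (Fin n) ℝ)
    (T : Ω → Matrix (Fin n) (Fin n) ℝ)
    (hTpd : ∀ᵐ ω ∂ℙ, (T ω).PosDef)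
    (hXmean : (Matrix.of fun i j => ∫ ω, X ω i j ∂ℙ) = Pxy)
    (hTmean : (Matrix.of fun i j => ∫ ω, T ω i j ∂ℙ) = S)
    (Pest Pac : Ω → Matrix (Fin m) (Fin m) ℝ)
    (hPest : ∀ ω, Pest ω = -(X ω * (T ω)⁻¹ * (X ω)ᵀ))
    (hPac : ∀ ω, Pac ω =
      X ω * (T ω)⁻¹ * S * (T ω)⁻¹ * (X ω)ᵀ
        - Pxy * (T ω)⁻¹ * (X ω)ᵀ - X ω * (T ω)⁻¹ * Pxyᵀ)
    (hXint : ∀ i j, Integrable (fun ω => X ω i j) ℙ)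
    (hTint : ∀ i j, Integrable (fun ω => T ω i j) ℙ)
    (hPestInt : ∀ i j, Integrable (fun ω => Pest ω i j) ℙ)
    (hPacInt : ∀ i j, Integrable (fun ω => Pac ω i j) ℙ) :
    (Matrix.of fun i j => ∫ ω, (Pac ω - Pest ω) i j ∂ℙ).PosSemidef := by
  set D : Ω → Matrix (Fin m) (Fin m) ℝ := fun ω => Pac ω - Pest ω with hDdef
  have hDint : ∀ i j, Integrable (fun ω => D ω i j) ℙ := fun i j => by
    exact (hPacInt i j).sub (hPestInt i j)
  have hDform : ∀ ω, D ω =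
      X ω * (T ω)⁻¹ * S * (T ω)⁻¹ * (X ω)ᵀ - Pxy * (T ω)⁻¹ * (X ω)ᵀ
        - X ω * (T ω)⁻¹ * Pxyᵀ + X ω * (T ω)⁻¹ * (X ω)ᵀ := by
    intro ω; simp [hDdef, hPac, hPest, sub_neg_eq_add]
  have hDsym : ∀ ω, (T ω).PosDef → (D ω)ᵀ = D ω := by
    intro ω hω
    have hTt : (T ω)ᵀ = T ω := hω.isHermitian.eq
    have hA : ((T ω)⁻¹)ᵀ = (T ω)⁻¹ := by
      rw [transpose_nonsing_inv, hTt]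
    have hSt : Sᵀ = S := hS.isHermitian.eq
    rw [hDform ω]
    simp only [hSt, Matrix.transpose_add, Matrix.transpose_sub, Matrix.transpose_mul,
      Matrix.transpose_transpose, hA, hS.isHermitian.eq]
    simp only [Matrix.mul_assoc]
    abel
  refine posSemidef_iff_dotProduct_mulVec.mpr ⟨?_, ?_⟩
  · -- Hermitian
    ext i j
    simp only [conjTranspose_apply, Matrix.of_apply, star_trivial]
    refine integral_congr_ae ?_
    filter_upwards [hTpd] with ω hω
    exact (congrFun (congrFun (hDsym ω hω) j) i).symm
  · intro v
    have hvM : star v ⬝ᵥ ((Matrix.of fun i j => ∫ ω, D ω i j ∂ℙ) *ᵥ v)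
        = ∑ i, ∑ j, v i * (∫ ω, D ω i j ∂ℙ) * v j := by
      simp [dotProduct, mulVec, Finset.mul_sum, mul_assoc]
    have hterm : ∀ (i j : Fin m), Integrable (fun ω => v i * D ω i j * v j) ℙ :=
      fun i j => ((hDint i j).const_mul _).mul_const _
    have hgsum : ∀ ω, v ⬝ᵥ (D ω *ᵥ v) = ∑ i, ∑ j, v i * D ω i j * v j := by
      intro ω; simp [dotProduct, mulVec, Finset.mul_sum, mul_assoc]
    have hgint : Integrable (fun ω => v ⬝ᵥ (D ω *ᵥ v)) ℙ := by
      simp only [hgsum]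
      exact integrable_finset_sum _ fun i _ => integrable_finset_sum _ fun j _ => hterm i j
    have hintg : ∫ ω, v ⬝ᵥ (D ω *ᵥ v) ∂ℙ = ∑ i, ∑ j, v i * (∫ ω, D ω i j ∂ℙ) * v j := by
      simp only [hgsum]
      rw [integral_finset_sum _ fun i _ => integrable_finset_sum _ fun j _ => hterm i j]
      refine Finset.sum_congr rfl fun i _ => ?_
      rw [integral_finset_sum _ fun j _ => hterm i j]
      refine Finset.sum_congr rfl fun j _ => ?_
      simp only [mul_assoc]
      rw [integral_const_mul, integral_mul_const]
    rw [hvM, ← hintg]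
    -- the affine lower bound
    set w : Fin n → ℝ := Pxyᵀ *ᵥ v with hw
    set q : Fin n → ℝ := S⁻¹ *ᵥ w with hq
    set l : Ω → ℝ := fun ω =>
      2 * (q ⬝ᵥ ((X ω)ᵀ *ᵥ v)) - q ⬝ᵥ (T ω *ᵥ q) - w ⬝ᵥ q with hl
    have hl1sum : ∀ ω, q ⬝ᵥ ((X ω)ᵀ *ᵥ v) = ∑ j, ∑ i, q j * (X ω i j * v i) := by
      intro ω; simp [dotProduct, mulVec, transpose_apply, Finset.mul_sum]
    have hl1int : Integrable (fun ω => q ⬝ᵥ ((X ω)ᵀ *ᵥ v)) ℙ := by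
      simp only [hl1sum]
      exact integrable_finset_sum _ fun j _ => integrable_finset_sum _ fun i _ =>
        (((hXint i j).mul_const _).const_mul _)
    have hl2sum : ∀ ω, q ⬝ᵥ (T ω *ᵥ q) = ∑ i, ∑ j, q i * (T ω i j * q j) := by
      intro ω; simp [dotProduct, mulVec, Finset.mul_sum]
    have hl2int : Integrable (fun ω => q ⬝ᵥ (T ω *ᵥ q)) ℙ := by
      simp only [hl2sum]
      exact integrable_finset_sum _ fun i _ => integrable_finset_sum _ fun j _ =>
        (((hTint i j).mul_const _).const_mul _)
    have hlint : Integrable l ℙ := by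
      have := ((hl1int.const_mul 2).sub hl2int).sub (integrable_const (w ⬝ᵥ q))
      exact this
    have hXm : ∀ i j, ∫ ω, X ω i j ∂ℙ = Pxy i j := by
      intro i j; exact congrFun (congrFun hXmean i) j
    have hTm : ∀ i j, ∫ ω, T ω i j ∂ℙ = S i j := by
      intro i j; exact congrFun (congrFun hTmean i) j
    have hSq : S *ᵥ q = w := by
      rw [hq, mulVec_mulVec, Matrix.mul_nonsing_inv _ (isUnit_iff_ne_zero.mpr hS.det_pos.ne'),
        one_mulVec]
    have hintl1 : ∫ ω, q ⬝ᵥ ((X ω)ᵀ *ᵥ v) ∂ℙ = q ⬝ᵥ w := by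
      simp only [hl1sum]
      rw [integral_finset_sum _ fun j _ => integrable_finset_sum _ fun i _ =>
        (((hXint i j).mul_const _).const_mul _)]
      have : ∀ j, ∫ ω, ∑ i, q j * (X ω i j * v i) ∂ℙ = ∑ i, q j * (Pxy i j * v i) := by
        intro j
        rw [integral_finset_sum _ fun i _ => (((hXint i j).mul_const _).const_mul _)]
        refine Finset.sum_congr rfl fun i _ => ?_
        rw [integral_const_mul, integral_mul_const, hXm]
      simp only [this]
      simp [hw, dotProduct, mulVec, transpose_apply, Finset.mul_sum]
    have hintl2 : ∫ ω, q ⬝ᵥ (T ω *ᵥ q) ∂ℙ = q ⬝ᵥ w := by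
      simp only [hl2sum]
      rw [integral_finset_sum _ fun i _ => integrable_finset_sum _ fun j _ =>
        (((hTint i j).mul_const _).const_mul _)]
      have : ∀ i, ∫ ω, ∑ j, q i * (T ω i j * q j) ∂ℙ = ∑ j, q i * (S i j * q j) := by
        intro i
        rw [integral_finset_sum _ fun j _ => (((hTint i j).mul_const _).const_mul _)]
        refine Finset.sum_congr rfl fun j _ => ?_
        rw [integral_const_mul, integral_mul_const, hTm]
      simp only [this]
      rw [← hSq]
      simp [dotProduct, mulVec, Finset.mul_sum]
    have h12 : Integrable (fun ω => 2 * (q ⬝ᵥ ((X ω)ᵀ *ᵥ v)) - q ⬝ᵥ (T ω *ᵥ q)) ℙ :=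
      (hl1int.const_mul 2).sub hl2int
    have hintl : ∫ ω, l ω ∂ℙ = 0 := by
      rw [hl]
      rw [integral_sub h12 (integrable_const (w ⬝ᵥ q)),
        integral_sub (hl1int.const_mul 2) hl2int, integral_const_mul, hintl1, hintl2,
        integral_const]
      simp only [measure_univ, probReal_univ, ENNReal.toReal_one, one_smul, smul_eq_mul, one_mul,
        dotProduct_comm w q]
      ring
    have hle : ∀ᵐ ω ∂ℙ, l ω ≤ v ⬝ᵥ (D ω *ᵥ v) := by
      filter_upwards [hTpd] with ω hω
      rw [hDform ω]
      exact key_mat hS hω (X ω) Pxy v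
    calc (0:ℝ) = ∫ ω, l ω ∂ℙ := hintl.symm
      _ ≤ ∫ ω, v ⬝ᵥ (D ω *ᵥ v) ∂ℙ := integral_mono_ae hlint hgint hle
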